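/- Let X and Y be real Banach spaces and let T : Y → X be a bounded linear operator. Then T is completely continuous (i.e. for every weakly convergent sequence (yₙ) in Y, the sequence (Tyₙ) is norm-convergent in X) if and only if for every Lipschitz function f : X → ℝ and every y ∈ Y, whenever f is Gâteaux differentiable at Ty, the composition f ∘ T is weak-Hadamard differentiable at y. -/

import Mathlib

open Bornology Filter Metric Set
open scoped NNReal Pointwise

section Defs

variable {X Z : Type*} [NormedAddCommGroup X] [NormedSpace ℝ X]
variable [NormedAddCommGroup Z] [NormedSpace ℝ Z]

/-- `f` is `β`-differentiable at `x₀` with differential `L`. -/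
def BetaDiffAt (β : Set (Set X)) (f : X → Z) (x₀ : X) (L : X →L[ℝ] Z) : Prop :=
  ∀ A ∈ β, ∀ ε > 0, ∃ δ > 0, ∀ t : ℝ, t ≠ 0 → |t| < δ → ∀ u ∈ A,
    ‖t⁻¹ • (f (x₀ + t • u) - f x₀) - L u‖ ≤ ε

/-- The Gâteaux bornology: nonempty finite sets. -/
def gateauxB (X : Type*) [NormedAddCommGroup X] : Set (Set X) :=
  {A | A.Nonempty ∧ A.Finite}

/-- The Fréchet bornology: nonempty bounded sets. -/
def frechetB (X : Type*) [NormedAddCommGroup X] : Set (Set X) :=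
  {A | A.Nonempty ∧ IsBounded A}

/-- The Hadamard bornology: nonempty relatively norm-compact sets. -/
def hadamardB (X : Type*) [NormedAddCommGroup X] : Set (Set X) :=
  {A | A.Nonempty ∧ IsCompact (closure A)}

/-- A bounded set is limited if every weak*-null sequence converges to 0 uniformly on it. -/
def IsLimitedSet (A : Set X) : Prop :=
  IsBounded A ∧ ∀ φ : ℕ → X →L[ℝ] ℝ,
    (∀ x : X, Tendsto (fun n => φ n x) atTop (nhds 0)) →
    ∀ ε > 0, ∃ N : ℕ, ∀ n ≥ N, ∀ x ∈ A, |φ n x| ≤ ε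

/-- The limited bornology: nonempty limited sets. -/
def limitedB (X : Type*) [NormedAddCommGroup X] [NormedSpace ℝ X] : Set (Set X) :=
  {A | A.Nonempty ∧ IsLimitedSet A}

/-- A set is relatively weakly compact if its closure in the weak topology is compact. -/
def RelWeaklyCompact (A : Set X) : Prop :=
  IsCompact (closure (⇑(toWeakSpace ℝ X) '' A) : Set (WeakSpace ℝ X))

/-- The weak-Hadamard bornology: nonempty relatively weakly compact sets. -/
def wHB (X : Type*) [NormedAddCommGroup X] [NormedSpace ℝ X] : Set (Set X) :=
  {A | A.Nonempty ∧ RelWeaklyCompact A}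

/-- A bornology (as a family of sets). -/
def IsBornologyFamily (β : Set (Set X)) : Prop :=
  (∀ A ∈ β, A.Nonempty ∧ IsBounded A) ∧
  (⋃ A ∈ β, A) = univ ∧
  (∀ A ∈ β, ∀ B ∈ β, A ∪ B ∈ β) ∧
  (∀ A ∈ β, ∀ B : Set X, B ⊆ A → B.Nonempty → B ∈ β)

/-- A vector bornology. -/
def IsVectorBornology (β : Set (Set X)) : Prop :=
  IsBornologyFamily β ∧
  (∀ A ∈ β, balancedHull ℝ A ∈ β) ∧
  (∀ A ∈ β, ∀ (x : X) (l : ℝ), (fun z => x + l • z) '' A ∈ β)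

/-- `(x, δ)` witnesses property (S) for the set `A`. -/
def WitnessS (β : Set (Set X)) (A : Set X) (x : ℕ → X) (δ : ℝ) : Prop :=
  (∀ n, x n ∈ A) ∧ 0 < δ ∧
  ∀ nk : ℕ → ℕ, StrictMono nk → ∀ y : ℕ → X,
    (∀ k, ‖y k - x (nk k)‖ ≤ δ) → Set.range y ∉ β

/-- Property (S) for a bornology. -/
def PropertyS (β : Set (Set X)) : Prop :=
  ∀ A : Set X, IsBounded A → A ∉ β → ∃ x δ, WitnessS β A x δ

/-- `T` is `β`-positively homogeneous differentiable at `y` with p.h. differential `R`. -/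
def PHDiffAt {Y : Type*} [NormedAddCommGroup Y] [NormedSpace ℝ Y]
    (β : Set (Set Y)) (T : Y → X) (y : Y) (R : Y → X) : Prop :=
  Continuous R ∧ (∀ c : ℝ, 0 ≤ c → ∀ z, R (c • z) = c • R z) ∧
  ∀ A ∈ β, ∀ ε > 0, ∃ δ > 0, ∀ t : ℝ, 0 < t → t < δ → ∀ z ∈ A,
    ‖t⁻¹ • (T (y + t • z) - T y) - R z‖ ≤ ε

end Defs


section AuxWeak
variable {E : Type*} [NormedAddCommGroup E] [NormedSpace ℝ E]

lemma dual_sep' {a : E} (h : ∀ φ : E →L[ℝ] ℝ, φ a = 0) : a = 0 := by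
  by_contra ha
  obtain ⟨g, hg1, hg2⟩ := exists_dual_vector ℝ a (norm_ne_zero_iff.mpr ha)
  have := h g
  rw [hg2] at this
  exact ha (by simpa using norm_eq_zero.mp (by simpa using this))

lemma pairing_injective' : Function.Injective ((topDualPairing ℝ E).flip) := by
  intro a b hab
  have : ∀ φ : E →L[ℝ] ℝ, φ (a - b) = 0 := by
    intro φ
    have := LinearMap.congr_fun hab φ
    simp only [LinearMap.flip_apply] at this
    rw [map_sub, sub_eq_zero]
    exact this
  exact sub_eq_zero.mp (dual_sep' this)

lemma tendsto_weakSpace' {α : Type*} {l : Filter α} {v : α → E} {a : E}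
    (h : ∀ φ : E →L[ℝ] ℝ, Tendsto (fun n => φ (v n)) l (nhds (φ a))) :
    Tendsto (fun n => toWeakSpace ℝ E (v n)) l (nhds (toWeakSpace ℝ E a)) := by
  exact (WeakBilin.tendsto_iff_forall_eval_tendsto (B := (topDualPairing ℝ E).flip) (l := l)
    (f := fun n => toWeakSpace ℝ E (v n)) (x := toWeakSpace ℝ E a) pairing_injective').mpr h

instance weak_t2' : T2Space (WeakSpace ℝ E) := by
  refine T2Space.of_injective_continuous
    (f := fun x (φ : E →L[ℝ] ℝ) => φ ((toWeakSpace ℝ E).symm x)) ?_ ?_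
  · intro a b hab
    have h0 : ∀ φ : E →L[ℝ] ℝ, φ ((toWeakSpace ℝ E).symm a - (toWeakSpace ℝ E).symm b) = 0 := by
      intro φ; rw [map_sub]; simpa [sub_eq_zero] using congrFun hab φ
    exact (toWeakSpace ℝ E).symm.injective (sub_eq_zero.mp (dual_sep' h0))
  · exact continuous_pi fun φ => WeakBilin.eval_continuous (topDualPairing ℝ E).flip φ

lemma weakSeqCompact {A : Set E} (hA : IsCompact (closure ((toWeakSpace ℝ E) '' A)))
    {u : ℕ → E} (hu : ∀ n, u n ∈ A) :
    ∃ a : E, ∃ nk : ℕ → ℕ, StrictMono nk ∧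
      ∀ φ : E →L[ℝ] ℝ, Tendsto (fun k => φ (u (nk k))) atTop (nhds (φ a)) := by
  classical
  set M := (Submodule.span ℝ (Set.range u)).topologicalClosure with hM
  have hMclosed : IsClosed (M : Set E) := Submodule.isClosed_topologicalClosure _
  have hsub : ∀ n, u n ∈ M := fun n =>
    Submodule.le_topologicalClosure _ (Submodule.subset_span ⟨n, rfl⟩)
  have hMsep : TopologicalSpace.IsSeparable (M : Set E) := by
    have : TopologicalSpace.IsSeparable (Submodule.span ℝ (Set.range u) : Set E) :=
      TopologicalSpace.IsSeparable.span ((Set.countable_range u).isSeparable)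
    simpa [hM, Submodule.topologicalClosure_coe] using TopologicalSpace.IsSeparable.closure this
  obtain ⟨c, hc_count, hc_sub⟩ := hMsep
  obtain ⟨z, hz⟩ : ∃ z : ℕ → E, insert (0:E) c = Set.range z :=
    Set.Countable.exists_eq_range (hc_count.insert 0) (insert_nonempty _ _)
  have hMz : (M : Set E) ⊆ closure (Set.range z) := by
    refine hc_sub.trans (closure_mono ?_)
    rw [← hz]; exact subset_insert _ _
  choose φ hφ1 hφ2 using fun k => exists_dual_vector'' ℝ (z k)
  have sep : ∀ x ∈ M, (∀ k, φ k x = 0) → x = 0 := by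
    intro x hx h0
    by_contra hxne
    have hxpos : 0 < ‖x‖ := norm_pos_iff.mpr hxne
    obtain ⟨k, hk⟩ : ∃ k, ‖z k - x‖ < ‖x‖ / 3 := by
      have := hMz hx
      rw [Metric.mem_closure_iff] at this
      obtain ⟨y, ⟨k, rfl⟩, hy⟩ := this (‖x‖/3) (by linarith)
      exact ⟨k, by rwa [dist_comm, dist_eq_norm] at hy⟩
    have h1 : φ k (z k) = ‖z k‖ := by exact_mod_cast hφ2 k
    have h2 : |φ k (z k - x)| ≤ ‖z k - x‖ := by
      calc |φ k (z k - x)| ≤ ‖φ k‖ * ‖z k - x‖ := (φ k).le_opNorm _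
      _ ≤ 1 * ‖z k - x‖ :=
          mul_le_mul_of_nonneg_right (by exact_mod_cast hφ1 k) (norm_nonneg _)
      _ = ‖z k - x‖ := one_mul _
    have h3 : ‖x‖ - ‖z k - x‖ ≤ ‖z k‖ := by
      linarith [norm_sub_norm_le x (z k), (by rw [norm_sub_rev] : ‖x - z k‖ = ‖z k - x‖)]
    have heq : φ k x = φ k (z k) - φ k (z k - x) := by rw [map_sub]; ring
    rw [h0 k] at heq
    have h5 : ‖z k‖ ≤ |φ k (z k - x)| := by
      rw [← h1]
      rw [eq_comm, sub_eq_zero] at heq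
      calc φ k (z k) = φ k (z k - x) := heq
      _ ≤ |φ k (z k - x)| := le_abs_self _
    linarith
  -- metrizability of the weak closure of the range
  set w : ℕ → WeakSpace ℝ E := fun n => toWeakSpace ℝ E (u n) with hw
  set W : Set (WeakSpace ℝ E) := closure (Set.range w) with hW
  have hWc : IsCompact W := by
    refine hA.of_isClosed_subset isClosed_closure (closure_mono ?_)
    rintro x ⟨n, rfl⟩; exact ⟨u n, hu n, rfl⟩
  have hWM : W ⊆ (toWeakSpace ℝ E) '' (M : Set E) := by
    have himg : (toWeakSpace ℝ E) '' (M : Set E)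
        = closure ((toWeakSpace ℝ E) '' (M : Set E)) := by
      have := (M.convex (𝕜 := ℝ)).toWeakSpace_closure (𝕜 := ℝ)
      rwa [hMclosed.closure_eq] at this
    rw [himg]
    refine closure_mono ?_
    rintro x ⟨n, rfl⟩; exact ⟨u n, hsub n, rfl⟩
  haveI : CompactSpace ↥W := isCompact_iff_compactSpace.mp hWc
  set ψm : ↥W → (ℕ → ℝ) := fun x k => φ k ((toWeakSpace ℝ E).symm x.1) with hψm
  have hψc : Continuous ψm := by
    refine continuous_pi fun k => ?_
    exact (WeakBilin.eval_continuous (topDualPairing ℝ E).flip (φ k)).comp continuous_subtype_val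
  have hψi : Function.Injective ψm := by
    rintro ⟨x, hx⟩ ⟨y, hy⟩ hxy
    obtain ⟨x', hx', rfl⟩ := hWM hx
    obtain ⟨y', hy', rfl⟩ := hWM hy
    have h0 : ∀ k, φ k (x' - y') = 0 := by
      intro k
      have := congrFun hxy k
      simp only [hψm, LinearEquiv.symm_apply_apply] at this
      rw [map_sub, this, sub_self]
    have := sep _ (M.sub_mem hx' hy') h0
    simp [sub_eq_zero.mp this]
  have hemb := hψc.isClosedEmbedding hψi
  haveI : TopologicalSpace.PseudoMetrizableSpace ↥W := hemb.isEmbedding.toIsInducing.pseudoMetrizableSpace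
  obtain ⟨a, -, nk, hnk, hconv⟩ :=
    isCompact_univ.tendsto_subseq (x := fun n => (⟨w n, subset_closure ⟨n, rfl⟩⟩ : ↥W))
      (fun n => mem_univ _)
  refine ⟨(toWeakSpace ℝ E).symm a.1, nk, hnk, fun ψ0 => ?_⟩
  have h1 : Tendsto (fun k => (⟨w (nk k), subset_closure ⟨nk k, rfl⟩⟩ : ↥W).1)
      atTop (nhds a.1) := (continuous_subtype_val.tendsto a).comp hconv
  exact ((WeakBilin.eval_continuous (topDualPairing ℝ E).flip ψ0).tendsto a.1).comp h1

end AuxWeak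


lemma bump_exists {E : Type*} [NormedAddCommGroup E] [NormedSpace ℝ E]
    (x₀ : E) (x : ℕ → E) (ε : ℝ) (hε : 0 < ε) (hx : ∀ n, ε ≤ ‖x n‖)
    (hweak : ∀ φ : E →L[ℝ] ℝ, Tendsto (fun n => φ (x n)) atTop (nhds 0)) :
    ∃ f : E → ℝ, LipschitzWith 1 f ∧ f x₀ = 0 ∧
      (∀ n : ℕ, ((n:ℝ)+1)⁻¹ * (ε/4) ≤ f (x₀ + ((n:ℝ)+1)⁻¹ • x n)) ∧
      BetaDiffAt (gateauxB E) f x₀ 0 := by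
  classical
  set τ : ℕ → ℝ := fun n => ((n:ℝ)+1)⁻¹ with hτ
  have hτpos : ∀ n, 0 < τ n := fun n => by positivity
  have hτle1 : ∀ n, τ n ≤ 1 := fun n => by
    rw [hτ]
    have h1 : (1:ℝ) ≤ (n:ℝ)+1 := by
      have : (0:ℝ) ≤ (n:ℝ) := Nat.cast_nonneg n
      linarith
    simpa using inv_le_one_of_one_le₀ h1
  have hτanti : ∀ m n : ℕ, m ≤ n → τ n ≤ τ m := fun m n h => by
    apply inv_anti₀ (by positivity)
    simp only [add_le_add_iff_right, Nat.cast_le]; exact_mod_cast h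
  set r : ℕ → ℝ := fun n => τ n * (ε/4) with hr
  have hrpos : ∀ n, 0 < r n := fun n => by
    have := hτpos n; rw [hr]; positivity
  set p : ℕ → E := fun n => x₀ + τ n • x n with hp
  set g : ℕ → E → ℝ := fun n z => max (r n - ‖z - p n‖) 0 with hg
  have hgle : ∀ n z, g n z ≤ ε/4 := by
    intro n z
    rw [hg]
    apply max_le _ (by linarith)
    have : r n ≤ ε/4 := by
      rw [hr]; nlinarith [hτle1 n, hτpos n]
    linarith [norm_nonneg (z - p n)]
  have bdd : ∀ z : E, BddAbove (Set.range fun n => g n z) := by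
    intro z
    exact ⟨ε/4, by rintro w ⟨n, rfl⟩; exact hgle n z⟩
  set f : E → ℝ := fun z => ⨆ n, g n z with hf
  have hg0 : ∀ n z, 0 ≤ g n z := fun n z => le_max_right _ _
  have hf_ge : ∀ n z, g n z ≤ f z := fun n z => le_ciSup (bdd z) n
  -- the key vanishing criterion
  have fzero : ∀ z : E, (∀ n, r n ≤ ‖z - p n‖) → f z = 0 := by
    intro z hz
    have : ∀ n, g n z = 0 := by
      intro n
      rw [hg]
      apply max_eq_right
      linarith [hz n]
    rw [hf]
    simp only [this, ciSup_const]
  -- Lipschitz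
  have hlip : LipschitzWith 1 f := by
    have key : ∀ z w : E, f z ≤ f w + ‖z - w‖ := by
      intro z w
      refine ciSup_le fun n => ?_
      have h1 : g n z ≤ g n w + ‖z - w‖ := by
        rw [hg]
        apply max_le
        · have h2 : ‖w - p n‖ ≤ ‖w - z‖ + ‖z - p n‖ := by
            calc ‖w - p n‖ = ‖(w - z) + (z - p n)‖ := by abel_nf
            _ ≤ ‖w - z‖ + ‖z - p n‖ := norm_add_le _ _
          have h3 : g n w ≥ r n - ‖w - p n‖ := le_max_left _ _
          have h4 : ‖w - z‖ = ‖z - w‖ := norm_sub_rev _ _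
          linarith
        · linarith [hg0 n w, norm_nonneg (z - w)]
      linarith [hf_ge n w]
    refine LipschitzWith.of_dist_le_mul fun z w => ?_
    simp only [NNReal.coe_one, one_mul]
    rw [Real.dist_eq, dist_eq_norm, abs_sub_le_iff]
    constructor
    · linarith [key z w]
    · linarith [key w z, (norm_sub_rev z w : ‖z - w‖ = ‖w - z‖)]
  have hfx₀ : f x₀ = 0 := by
    apply fzero
    intro n
    rw [hp]
    have : ‖x₀ - (x₀ + τ n • x n)‖ = τ n * ‖x n‖ := by
      rw [show x₀ - (x₀ + τ n • x n) = -(τ n • x n) by abel, norm_neg, norm_smul,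
        Real.norm_eq_abs, abs_of_pos (hτpos n)]
    rw [this, hr]
    have := hτpos n
    have := hx n
    nlinarith
  have hfp : ∀ n, r n ≤ f (p n) := by
    intro n
    refine le_trans ?_ (hf_ge n (p n))
    rw [hg]
    simp only [sub_self, norm_zero, sub_zero]
    exact le_max_left _ _ |>.trans_eq (by rw [max_eq_left (hrpos n).le])
  -- directional vanishing
  have dirvan : ∀ v : E, ∃ δ > 0, ∀ t : ℝ, |t| < δ → f (x₀ + t • v) = 0 := by
    intro v
    rcases eq_or_ne v 0 with rfl | hv
    · refine ⟨1, one_pos, fun t _ => ?_⟩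
      simp only [smul_zero, add_zero]
      exact hfx₀
    · obtain ⟨φ, hφ1, hφ2⟩ := exists_dual_vector ℝ v (norm_ne_zero_iff.mpr hv)
      have hφ2 : φ v = ‖v‖ := by exact_mod_cast hφ2
      obtain ⟨N, hN⟩ : ∃ N, ∀ n ≥ N, |φ (x n)| ≤ ε/2 := by
        have := Metric.tendsto_atTop.mp (hweak φ) (ε/2) (by linarith)
        obtain ⟨N, hN⟩ := this
        exact ⟨N, fun n hn => by
          have := hN n hn; rw [Real.dist_eq, sub_zero] at this; exact this.le⟩
      refine ⟨(3*ε/4) * τ N / (‖v‖+1), by positivity, fun t ht => ?_⟩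
      apply fzero
      intro n
      rw [hp, show x₀ + t • v - (x₀ + τ n • x n) = t • v - τ n • x n by abel]
      by_contra hcon
      push_neg at hcon
      -- common facts
      have hb1 : τ n * ‖x n‖ ≤ |t| * ‖v‖ + r n := by
        have h1 : ‖τ n • x n‖ ≤ ‖t • v‖ + ‖t • v - τ n • x n‖ := by
          calc ‖τ n • x n‖ = ‖t • v - (t • v - τ n • x n)‖ := by rw [sub_sub_cancel]
          _ ≤ ‖t • v‖ + ‖t • v - τ n • x n‖ := norm_sub_le _ _
        rw [norm_smul, norm_smul, Real.norm_eq_abs, Real.norm_eq_abs,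
          abs_of_pos (hτpos n)] at h1
        linarith [hcon.le]
      have hlow : 3/4 * (τ n * ε) ≤ |t| * ‖v‖ := by
        have := hx n
        have h2 : τ n * ε ≤ τ n * ‖x n‖ :=
          mul_le_mul_of_nonneg_left this (hτpos n).le
        rw [hr] at hb1
        nlinarith [hτpos n]
      rcases le_or_gt N n with hnN | hnN
      · -- use the functional
        have h3 : |φ (t • v) - τ n * φ (x n)| < r n := by
          have := (φ.le_opNorm (t • v - τ n • x n))
          rw [hφ1, one_mul] at this
          calc |φ (t • v) - τ n * φ (x n)| = |φ (t • v - τ n • x n)| := by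
                rw [map_sub, map_smul]; norm_num
          _ = ‖φ (t • v - τ n • x n)‖ := (Real.norm_eq_abs _).symm
          _ ≤ ‖t • v - τ n • x n‖ := this
          _ < r n := hcon
        have h4 : |φ (t • v)| = |t| * ‖v‖ := by
          rw [map_smul, smul_eq_mul, hφ2, abs_mul, abs_of_nonneg (norm_nonneg v)]
        have h5 : |t| * ‖v‖ < τ n * (ε/2) + r n := by
          have := hN n hnN
          have h6 : |φ (t • v)| ≤ |φ (t • v) - τ n * φ (x n)| + |τ n * φ (x n)| := by
            calc |φ (t • v)| = |(φ (t • v) - τ n * φ (x n)) + τ n * φ (x n)| := by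
                  rw [sub_add_cancel]
            _ ≤ _ := abs_add_le _ _
          rw [h4] at h6
          have h7 : |τ n * φ (x n)| ≤ τ n * (ε/2) := by
            rw [abs_mul, abs_of_pos (hτpos n)]
            exact mul_le_mul_of_nonneg_left this (hτpos n).le
          linarith
        rw [hr] at h5
        nlinarith [hτpos n]
      · -- small n: |t| is too small
        have h8 : |t| * ‖v‖ < 3/4 * (τ n * ε) := by
          have hδ : |t| < (3*ε/4) * τ N / (‖v‖+1) := ht
          have h9 : |t| * (‖v‖+1) < (3*ε/4) * τ N := by
            rw [div_mul_eq_mul_div, lt_div_iff₀ (by positivity)] at hδ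
            linarith
          have h10 : τ N ≤ τ n := hτanti n N hnN.le
          have h11 : |t| * ‖v‖ ≤ |t| * (‖v‖+1) :=
            mul_le_mul_of_nonneg_left (by linarith) (abs_nonneg t)
          nlinarith [hτpos N]
        linarith
  -- Gateaux differentiability with derivative 0
  have hgat : BetaDiffAt (gateauxB E) f x₀ 0 := by
    intro A hA ε' hε'
    choose D hDpos hD using dirvan
    obtain ⟨hAne, hAfin⟩ := hA
    have hne : hAfin.toFinset.Nonempty := by
      rwa [Set.Finite.toFinset_nonempty]
    refine ⟨hAfin.toFinset.inf' hne D, ?_, ?_⟩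
    · show 0 < hAfin.toFinset.inf' hne D
      rw [Finset.lt_inf'_iff]
      exact fun v _ => hDpos v
    · intro t ht0 htδ u hu
      have : f (x₀ + t • u) = 0 := by
        apply hD u
        exact htδ.trans_le (Finset.inf'_le D (by rwa [Set.Finite.mem_toFinset]))
      rw [this, hfx₀]
      simp [hε'.le]
  exact ⟨f, hlip, hfx₀, fun n => by
    have := hfp n
    rw [hr, hp] at this
    exact this, hgat⟩


theorem ccc_fwd_aux
    {X Y : Type*} [NormedAddCommGroup X] [NormedSpace ℝ X] [CompleteSpace X]
    [NormedAddCommGroup Y] [NormedSpace ℝ Y] [CompleteSpace Y]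
    (T : Y →L[ℝ] X)
    (hT : ∀ (u : ℕ → Y) (y₀ : Y),
        (∀ φ : Y →L[ℝ] ℝ, Tendsto (fun n => φ (u n)) atTop (nhds (φ y₀))) →
        Tendsto (fun n => T (u n)) atTop (nhds (T y₀)))
    (f : X → ℝ) (K : ℝ≥0) (hf : LipschitzWith K f) (y : Y)
    (L : X →L[ℝ] ℝ) (hL : BetaDiffAt (gateauxB X) f (T y) L) :
    BetaDiffAt (wHB Y) (f ∘ T) y (L.comp T) := by
  by_contra hbad
  simp only [BetaDiffAt] at hbad
  push_neg at hbad
  obtain ⟨A, ⟨hAne, hAw⟩, ε, hε, hbad⟩ := hbad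
  have hseq : ∀ n : ℕ, ∃ t : ℝ, t ≠ 0 ∧ |t| < (n+1:ℝ)⁻¹ ∧ ∃ v ∈ A,
      ε < ‖t⁻¹ • ((f ∘ T) (y + t • v) - (f ∘ T) y) - (L.comp T) v‖ := by
    intro n
    obtain ⟨t, ht0, htδ, v, hvA, hv⟩ := hbad ((n+1:ℝ)⁻¹) (by positivity)
    exact ⟨t, ht0, htδ, v, hvA, hv⟩
  choose t ht0 htlt v hvA hbig using hseq
  obtain ⟨a, nk, hnk, ha⟩ := weakSeqCompact hAw hvA
  have hTa : Tendsto (fun k => T (v (nk k))) atTop (nhds (T a)) :=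
    hT (fun k => v (nk k)) a ha
  set e : ℕ → ℝ := fun n => (t n)⁻¹ • ((f ∘ T) (y + t n • v n) - (f ∘ T) y) - (L.comp T) (v n)
    with he
  have hs0 : Tendsto (fun k => t (nk k)) atTop (nhds 0) := by
    rw [tendsto_zero_iff_abs_tendsto_zero]
    refine squeeze_zero (fun k => abs_nonneg _) (fun k => (htlt (nk k)).le) ?_
    apply tendsto_inv_atTop_zero.comp
    apply tendsto_atTop_add_const_right
    exact tendsto_natCast_atTop_atTop.comp hnk.tendsto_atTop
  have hnorm0 : Tendsto (fun k => ‖T (v (nk k)) - T a‖) atTop (nhds 0) := by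
    simpa using (hTa.sub (tendsto_const_nhds (x := T a))).norm
  have key : Tendsto (fun k => e (nk k)) atTop (nhds 0) := by
    have hdecomp : ∀ k, e (nk k) =
        ((t (nk k))⁻¹ * (f (T y + t (nk k) • T (v (nk k))) - f (T y + t (nk k) • T a)))
        + ((t (nk k))⁻¹ * (f (T y + t (nk k) • T a) - f (T y)) - L (T a))
        + (L (T a) - L (T (v (nk k)))) := by
      intro k
      simp only [he, Function.comp_apply, map_add, map_smul, smul_eq_mul,
        ContinuousLinearMap.comp_apply]
      ring
    rw [show (0:ℝ) = 0 + 0 + 0 by norm_num]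
    refine Tendsto.congr (fun k => (hdecomp k).symm) (Tendsto.add (Tendsto.add ?_ ?_) ?_)
    · -- Lipschitz term
      refine squeeze_zero_norm (fun k => ?_)
        (show Tendsto (fun k => (K:ℝ) * ‖T (v (nk k)) - T a‖) atTop (nhds 0) by
          simpa using tendsto_const_nhds.mul hnorm0)
      · have hd := hf.dist_le_mul (T y + t (nk k) • T (v (nk k))) (T y + t (nk k) • T a)
        rw [Real.dist_eq] at hd
        have h2 : dist (T y + t (nk k) • T (v (nk k))) (T y + t (nk k) • T a)
            = |t (nk k)| * ‖T (v (nk k)) - T a‖ := by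
          rw [dist_eq_norm, show T y + t (nk k) • T (v (nk k)) - (T y + t (nk k) • T a)
            = t (nk k) • (T (v (nk k)) - T a) by module, norm_smul, Real.norm_eq_abs]
        rw [h2] at hd
        have h3 : (0:ℝ) < |t (nk k)| := abs_pos.mpr (ht0 (nk k))
        calc ‖(t (nk k))⁻¹ * (f (T y + t (nk k) • T (v (nk k))) - f (T y + t (nk k) • T a))‖
            = |t (nk k)|⁻¹ * |f (T y + t (nk k) • T (v (nk k))) - f (T y + t (nk k) • T a)| := by
              rw [Real.norm_eq_abs, abs_mul, abs_inv]
          _ ≤ |t (nk k)|⁻¹ * (K * (|t (nk k)| * ‖T (v (nk k)) - T a‖)) :=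
              mul_le_mul_of_nonneg_left hd (by positivity)
          _ = K * ‖T (v (nk k)) - T a‖ := by field_simp
    · -- Gateaux term
      rw [NormedAddCommGroup.tendsto_nhds_zero]
      intro ε' hε'
      obtain ⟨δ, hδ, hGa⟩ := hL {T a} ⟨singleton_nonempty _, finite_singleton _⟩ (ε'/2)
        (by linarith)
      have hev : ∀ᶠ k in atTop, |t (nk k)| < δ := by
        have := Metric.tendsto_nhds.mp hs0 δ hδ
        simpa [Real.dist_eq] using this
      refine hev.mono fun k hk => ?_
      have := hGa (t (nk k)) (ht0 (nk k)) hk (T a) rfl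
      calc ‖(t (nk k))⁻¹ * (f (T y + t (nk k) • T a) - f (T y)) - L (T a)‖
          = ‖(t (nk k))⁻¹ • (f (T y + t (nk k) • T a) - f (T y)) - L (T a)‖ := by
            rw [smul_eq_mul]
        _ ≤ ε'/2 := this
        _ < ε' := by linarith
    · -- continuity term
      have : Tendsto (fun k => L (T (v (nk k)))) atTop (nhds (L (T a))) :=
        ((L.continuous.tendsto _).comp hTa)
      simpa using (tendsto_const_nhds (x := L (T a))).sub this
  have : ∀ᶠ k in atTop, |e (nk k)| < ε := by
    have := Metric.tendsto_nhds.mp key ε hε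
    simpa [Real.dist_eq] using this
  obtain ⟨k, hk⟩ := this.exists
  exact absurd (hbig (nk k)) (by simp only [he, Real.norm_eq_abs] at *; linarith)


theorem ccc_rev_aux
    {X Y : Type*} [NormedAddCommGroup X] [NormedSpace ℝ X] [CompleteSpace X]
    [NormedAddCommGroup Y] [NormedSpace ℝ Y] [CompleteSpace Y]
    (T : Y →L[ℝ] X)
    (H : ∀ f : X → ℝ, (∃ K : ℝ≥0, LipschitzWith K f) → ∀ y : Y,
        (∃ L : X →L[ℝ] ℝ, BetaDiffAt (gateauxB X) f (T y) L) →
        ∃ L' : Y →L[ℝ] ℝ, BetaDiffAt (wHB Y) (f ∘ T) y L')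
    (u : ℕ → Y) (y₀ : Y)
    (hu : ∀ φ : Y →L[ℝ] ℝ, Tendsto (fun n => φ (u n)) atTop (nhds (φ y₀))) :
    Tendsto (fun n => T (u n)) atTop (nhds (T y₀)) := by
  by_contra hbad
  obtain ⟨ε, hε, nk, hnk, hfar⟩ : ∃ ε > 0, ∃ nk : ℕ → ℕ, StrictMono nk ∧
      ∀ k, ε ≤ ‖T (u (nk k)) - T y₀‖ := by
    rw [Metric.tendsto_atTop] at hbad
    push_neg at hbad
    obtain ⟨ε, hε, hfreq⟩ := hbad
    obtain ⟨nk, hnk, hP⟩ := extraction_of_frequently_atTop (P := fun n => ε ≤ dist (T (u n)) (T y₀))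
      (Filter.frequently_atTop'.mpr fun N => by
        obtain ⟨n, hn1, hn2⟩ := hfreq (N+1)
        exact ⟨n, by omega, hn2⟩)
    exact ⟨ε, hε, nk, hnk, fun k => by simpa [dist_eq_norm] using hP k⟩
  set v : ℕ → Y := fun k => u (nk k) - y₀ with hv
  set x : ℕ → X := fun k => T (u (nk k)) - T y₀ with hx
  have hxv : ∀ k, x k = T (v k) := fun k => by rw [hv, hx, map_sub]
  have hvweak : ∀ φ : Y →L[ℝ] ℝ, Tendsto (fun k => φ (v k)) atTop (nhds 0) := by
    intro φ
    have h1 : Tendsto (fun k => φ (u (nk k))) atTop (nhds (φ y₀)) :=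
      (hu φ).comp hnk.tendsto_atTop
    simpa [hv, map_sub, sub_self] using h1.sub (tendsto_const_nhds (x := φ y₀))
  have hxweak : ∀ ψ : X →L[ℝ] ℝ, Tendsto (fun k => ψ (x k)) atTop (nhds 0) := by
    intro ψ
    have := hvweak (ψ.comp T)
    simpa [hxv, ContinuousLinearMap.comp_apply] using this
  obtain ⟨f, hlip, hf0, hfp, hgat⟩ := bump_exists (T y₀) x ε hε (fun k => hfar k) hxweak
  obtain ⟨L', hL'⟩ := H f ⟨1, hlip⟩ y₀ ⟨0, hgat⟩
  -- the weakly compact set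
  set A : Set Y := insert 0 (Set.range v) with hA
  have hAw : A ∈ wHB Y := by
    refine ⟨insert_nonempty _ _, ?_⟩
    have hcpt : IsCompact (insert (toWeakSpace ℝ Y 0)
        (Set.range fun k => toWeakSpace ℝ Y (v k))) := by
      refine Filter.Tendsto.isCompact_insert_range ?_
      exact tendsto_weakSpace' (a := 0) (fun φ => by simpa [map_zero] using hvweak φ)
    have himg : (⇑(toWeakSpace ℝ Y)) '' A
        = insert (toWeakSpace ℝ Y 0) (Set.range fun k => toWeakSpace ℝ Y (v k)) := by
      rw [hA, Set.image_insert_eq]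
      congr 1
      rw [← Set.range_comp]
      rfl
    rw [RelWeaklyCompact, himg, IsClosed.closure_eq hcpt.isClosed]
    exact hcpt
  obtain ⟨δ, hδ, hQ⟩ := hL' A hAw (ε/16) (by linarith)
  -- choose k
  have hτ0 : Tendsto (fun k : ℕ => ((k:ℝ)+1)⁻¹) atTop (nhds 0) := by
    apply tendsto_inv_atTop_zero.comp
    apply tendsto_atTop_add_const_right
    exact tendsto_natCast_atTop_atTop
  have hev1 : ∀ᶠ k : ℕ in atTop, ((k:ℝ)+1)⁻¹ < δ := by
    have := Metric.tendsto_nhds.mp hτ0 δ hδ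
    refine this.mono fun k hk => ?_
    rw [Real.dist_eq, sub_zero, abs_of_pos (by positivity)] at hk
    exact hk
  have hev2 : ∀ᶠ k in atTop, |L' (v k)| < ε/16 := by
    have := Metric.tendsto_nhds.mp (hvweak L') (ε/16) (by linarith)
    refine this.mono fun k hk => by rwa [Real.dist_eq, sub_zero] at hk
  obtain ⟨k, hk1, hk2⟩ := (hev1.and hev2).exists
  set τ : ℝ := ((k:ℝ)+1)⁻¹ with hτdef
  have hτpos : 0 < τ := by positivity
  have hmem : v k ∈ A := by rw [hA]; exact mem_insert_iff.mpr (Or.inr ⟨k, rfl⟩)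
  have hQk := hQ τ (ne_of_gt hτpos) (by rwa [abs_of_pos hτpos]) (v k) hmem
  have hcomp : (f ∘ T) (y₀ + τ • v k) = f (T y₀ + τ • x k) := by
    simp only [Function.comp_apply, map_add, map_smul, hxv]
  have hcomp0 : (f ∘ T) y₀ = 0 := hf0
  rw [hcomp, hcomp0, sub_zero] at hQk
  have hquot : ε/4 ≤ τ⁻¹ * f (T y₀ + τ • x k) := by
    have := hfp k
    rw [← hτdef] at this
    have h2 : τ⁻¹ * (τ * (ε/4)) ≤ τ⁻¹ * f (T y₀ + τ • x k) :=
      mul_le_mul_of_nonneg_left this (by positivity)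
    rwa [← mul_assoc, inv_mul_cancel₀ (ne_of_gt hτpos), one_mul] at h2
  have habs : ε/16 < ‖τ⁻¹ • f (T y₀ + τ • x k) - L' (v k)‖ := by
    rw [Real.norm_eq_abs, smul_eq_mul]
    have h3 : ε/4 - ε/16 ≤ τ⁻¹ * f (T y₀ + τ • x k) - L' (v k) := by
      have := abs_lt.mp hk2
      linarith
    have : ε/16 < τ⁻¹ * f (T y₀ + τ • x k) - L' (v k) := by linarith
    exact this.trans_le (le_abs_self _)
  exact absurd hQk (not_le.mpr habs)


/-- a bounded linear operator `T : Y → X` between Banach spaces is completely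
continuous iff for every Lipschitz `f : X → ℝ` and every `y`, Gâteaux differentiability of
`f` at `T y` implies weak-Hadamard differentiability of `f ∘ T` at `y`. -/
theorem completelyContinuous_iff_gateaux_to_weakHadamard
    {X Y : Type*} [NormedAddCommGroup X] [NormedSpace ℝ X] [CompleteSpace X]
    [NormedAddCommGroup Y] [NormedSpace ℝ Y] [CompleteSpace Y]
    (T : Y →L[ℝ] X) :
    (∀ (u : ℕ → Y) (y₀ : Y),
        (∀ φ : Y →L[ℝ] ℝ, Tendsto (fun n => φ (u n)) atTop (nhds (φ y₀))) →
        Tendsto (fun n => T (u n)) atTop (nhds (T y₀))) ↔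
      ∀ f : X → ℝ, (∃ K : ℝ≥0, LipschitzWith K f) → ∀ y : Y,
        (∃ L : X →L[ℝ] ℝ, BetaDiffAt (gateauxB X) f (T y) L) →
        ∃ L' : Y →L[ℝ] ℝ, BetaDiffAt (wHB Y) (f ∘ T) y L' := by
  constructor
  · intro hT f hf y hL
    obtain ⟨K, hK⟩ := hf
    obtain ⟨L, hL⟩ := hL
    exact ⟨L.comp T, ccc_fwd_aux T hT f K hK y L hL⟩
  · intro H u y₀ hu
    exact ccc_rev_aux T H u y₀ hu
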